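/- arXiv:2509.24936 — 2 statements merged into one kernel-verified Lean document; each statement's English description precedes it below -/
import Mathlib

section
/- Fix α∈[0,1] and vectors v₀,v₁,u∈ℝ^d; set v̄=(v₀+v₁)/2 and w=v₁−v₀. Define L(x) = α(‖(v₀+x)/2−u‖² + ‖(x+v₁)/2−u‖²) + (1−α)(‖x−v₀‖² + ‖v₁−x‖²). Then for 0<α<1, min over x∈ℝ^d of L(x) equals (8α(1−α)/(4−3α))‖u−v̄‖² + (1/2 − 3α/8)‖w‖², attained at x = (2α/(4−3α))u + ((4−5α)/(4−3α))v̄. -/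
open RealInnerProductSpace

lemma oat_key {E : Type*} [NormedAddCommGroup E] [InnerProductSpace ℝ E]
    (α : ℝ) (h : 4 - 3 * α ≠ 0) (v₀ v₁ u x : E) :
    α * (‖(2:ℝ)⁻¹ • (v₀ + x) - u‖ ^ 2 + ‖(2:ℝ)⁻¹ • (x + v₁) - u‖ ^ 2)
      + (1 - α) * (‖x - v₀‖ ^ 2 + ‖v₁ - x‖ ^ 2) =
    8 * α * (1 - α) / (4 - 3 * α) * ‖u - (2:ℝ)⁻¹ • (v₀ + v₁)‖ ^ 2
      + (1 / 2 - 3 * α / 8) * ‖v₁ - v₀‖ ^ 2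
      + (4 - 3 * α) / 2 * ‖x - ((2 * α / (4 - 3 * α)) • u
          + ((4 - 5 * α) / (4 - 3 * α)) • ((2:ℝ)⁻¹ • (v₀ + v₁)))‖ ^ 2 := by
  simp only [← real_inner_self_eq_norm_sq, inner_sub_left, inner_sub_right,
    inner_add_left, inner_add_right, inner_smul_left, inner_smul_right,
    real_inner_comm v₀ u, real_inner_comm v₁ u, real_inner_comm x u,
    real_inner_comm v₁ v₀, real_inner_comm x v₀, real_inner_comm x v₁,
    RCLike.conj_to_real]
  field_simp
  ring_nf
  have h' : 4 - α * 3 ≠ 0 := by contrapose! h; linarith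
  field_simp
  ring

/-- Minimization of the per-sample OAT-FM objective over vₜ, for 0<α<1. -/
theorem oat_per_sample_min
    (d : ℕ) (α : ℝ) (hα₀ : 0 < α) (hα₁ : α < 1)
    (v₀ v₁ u : EuclideanSpace ℝ (Fin d)) :
    (∀ x : EuclideanSpace ℝ (Fin d),
        8 * α * (1 - α) / (4 - 3 * α) * ‖u - (2:ℝ)⁻¹ • (v₀ + v₁)‖ ^ 2
          + (1 / 2 - 3 * α / 8) * ‖v₁ - v₀‖ ^ 2 ≤
        α * (‖(2:ℝ)⁻¹ • (v₀ + x) - u‖ ^ 2 + ‖(2:ℝ)⁻¹ • (x + v₁) - u‖ ^ 2)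
          + (1 - α) * (‖x - v₀‖ ^ 2 + ‖v₁ - x‖ ^ 2)) ∧
    (α * (‖(2:ℝ)⁻¹ • (v₀ + ((2 * α / (4 - 3 * α)) • u
              + ((4 - 5 * α) / (4 - 3 * α)) • ((2:ℝ)⁻¹ • (v₀ + v₁)))) - u‖ ^ 2
          + ‖(2:ℝ)⁻¹ • (((2 * α / (4 - 3 * α)) • u
              + ((4 - 5 * α) / (4 - 3 * α)) • ((2:ℝ)⁻¹ • (v₀ + v₁))) + v₁) - u‖ ^ 2)
        + (1 - α) * (‖((2 * α / (4 - 3 * α)) • u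
              + ((4 - 5 * α) / (4 - 3 * α)) • ((2:ℝ)⁻¹ • (v₀ + v₁))) - v₀‖ ^ 2
          + ‖v₁ - ((2 * α / (4 - 3 * α)) • u
              + ((4 - 5 * α) / (4 - 3 * α)) • ((2:ℝ)⁻¹ • (v₀ + v₁)))‖ ^ 2) =
      8 * α * (1 - α) / (4 - 3 * α) * ‖u - (2:ℝ)⁻¹ • (v₀ + v₁)‖ ^ 2
        + (1 / 2 - 3 * α / 8) * ‖v₁ - v₀‖ ^ 2) := by
  have h : 4 - 3 * α ≠ 0 := by nlinarith
  constructor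
  · intro x
    rw [oat_key α h v₀ v₁ u x]
    have : 0 ≤ (4 - 3 * α) / 2 * ‖x - ((2 * α / (4 - 3 * α)) • u
        + ((4 - 5 * α) / (4 - 3 * α)) • ((2:ℝ)⁻¹ • (v₀ + v₁)))‖ ^ 2 := by
      apply mul_nonneg (by linarith) (sq_nonneg _)
    linarith
  · rw [oat_key α h v₀ v₁ u _]
    simp
end

section
/- Let α=2/3 and let v₀,v₁,u,x∈ℝ^d. Define L(x) = α(‖(v₀+x)/2−u‖² + ‖(x+v₁)/2−u‖²) + (1−α)(‖x−v₀‖² + ‖v₁−x‖²) and define the acceleration cost c²_A = 12‖u−(v₀+v₁)/2‖² + ‖v₁−v₀‖². Then for every x∈ℝ^d, L(x) ≥ (2/27)·c²_A. -/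
/-- With α = 2/3, the per-sample OAT-FM objective is bounded below by (2/27)·c²_A. -/
theorem per_sample_bound_two_thirds
    (d : ℕ) (v₀ v₁ u : EuclideanSpace ℝ (Fin d)) :
    ∀ x : EuclideanSpace ℝ (Fin d),
      (2 / 27) * (12 * ‖u - (2:ℝ)⁻¹ • (v₀ + v₁)‖ ^ 2 + ‖v₁ - v₀‖ ^ 2) ≤
        (2 / 3) * (‖(2:ℝ)⁻¹ • (v₀ + x) - u‖ ^ 2 + ‖(2:ℝ)⁻¹ • (x + v₁) - u‖ ^ 2)
          + (1 - 2 / 3) * (‖x - v₀‖ ^ 2 + ‖v₁ - x‖ ^ 2) := by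
  intro x
  have h1 : (0:ℝ) ≤ ‖x - (2/3:ℝ) • u - (6:ℝ)⁻¹ • (v₀ + v₁)‖ ^ 2 := sq_nonneg _
  have h2 : (0:ℝ) ≤ ‖v₁ - v₀‖ ^ 2 := sq_nonneg _
  simp only [← @real_inner_self_eq_norm_sq] at h1 h2 ⊢
  simp only [inner_sub_left, inner_sub_right, inner_add_left, inner_add_right,
    inner_smul_left, inner_smul_right, RCLike.conj_to_real,
    real_inner_comm x v₀, real_inner_comm x v₁, real_inner_comm x u,
    real_inner_comm v₀ v₁, real_inner_comm u v₀, real_inner_comm u v₁] at h1 h2 ⊢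
  linarith [h1, h2]
end
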